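/- Let σ be a feasible tour and let i, j be pickup nodes (elements of Fin (2*n) with value < n). Then the visiting sequence obtained from σ by exchanging the positions of pickup nodes i and j and simultaneously exchanging the positions of the paired delivery nodes i + n and j + n — i.e. the permutation σ.trans ((Equiv.swap i j).trans (Equiv.swap (i + n) (j + n))), which relabels σ's output by swapping i with j and i + n with j + n — is a feasible tour. -/
import Mathlib


/-- A visiting sequence `σ` (where `σ k` is the node visited at position `k`) is a
feasible tour if every pickup node `i` (i.e. `(i : ℕ) < n`) is visited before its
paired delivery node `i + n`. -/
def IsFeasibleTour (n : ℕ) (σ : Equiv.Perm (Fin (2 * n))) : Prop :=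
  ∀ i : Fin (2 * n), ∀ _h : (i : ℕ) < n,
    σ⁻¹ i < σ⁻¹ (⟨(i : ℕ) + n, by omega⟩ : Fin (2 * n))

/-- Node pair exchange: exchanging the positions of two pickup nodes `i` and `j`
and simultaneously exchanging the positions of their paired delivery nodes
`i + n` and `j + n` maps a feasible tour to a feasible tour. -/
theorem node_pair_exchange_feasible (n : ℕ) (σ : Equiv.Perm (Fin (2 * n)))
    (hσ : IsFeasibleTour n σ) (i j : Fin (2 * n))
    (hi : (i : ℕ) < n) (hj : (j : ℕ) < n) :
    IsFeasibleTour n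
      (σ.trans ((Equiv.swap i j).trans
        (Equiv.swap (⟨(i : ℕ) + n, by omega⟩ : Fin (2 * n))
          (⟨(j : ℕ) + n, by omega⟩ : Fin (2 * n))))) := by
  intro k hk
  set i' : Fin (2 * n) := ⟨(i : ℕ) + n, by omega⟩ with hi'
  set j' : Fin (2 * n) := ⟨(j : ℕ) + n, by omega⟩ with hj'
  set k' : Fin (2 * n) := ⟨(k : ℕ) + n, by omega⟩ with hk'
  have key : ∀ x, (σ.trans ((Equiv.swap i j).trans (Equiv.swap i' j')))⁻¹ x
      = σ⁻¹ ((Equiv.swap i j) ((Equiv.swap i' j') x)) := by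
    intro x
    show (σ.trans ((Equiv.swap i j).trans (Equiv.swap i' j'))).symm x = _
    simp only [Equiv.symm_trans_apply]
    rfl
  rw [key k, key k']
  have hki' : k ≠ i' := by
    intro h; apply_fun (Fin.val) at h; simp [hi'] at h; omega
  have hkj' : k ≠ j' := by
    intro h; apply_fun (Fin.val) at h; simp [hj'] at h; omega
  rw [Equiv.swap_apply_of_ne_of_ne hki' hkj']
  by_cases hki : k = i
  · subst hki
    have hkk : k' = i' := by simp [hk', hi']
    have h5 : j' ≠ k := by
      intro h; apply_fun Fin.val at h; simp [hj'] at h; omega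
    have h6 : j' ≠ j := by
      intro h; apply_fun Fin.val at h; simp [hj'] at h; omega
    rw [hkk, Equiv.swap_apply_left, Equiv.swap_apply_left,
      Equiv.swap_apply_of_ne_of_ne h5 h6]
    exact hσ j hj
  · by_cases hkj : k = j
    · subst hkj
      have hkk : k' = j' := by simp [hk', hj']
      have h5 : i' ≠ i := by
        intro h; apply_fun Fin.val at h; simp [hi'] at h; omega
      have h6 : i' ≠ k := by
        intro h; apply_fun Fin.val at h; simp [hi'] at h; omega
      rw [hkk, Equiv.swap_apply_right, Equiv.swap_apply_right,
        Equiv.swap_apply_of_ne_of_ne h5 h6]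
      exact hσ i hi
    · rw [Equiv.swap_apply_of_ne_of_ne hki hkj]
      have h1 : k' ≠ i' := by
        intro h; apply hki; apply_fun Fin.val at h; simp [hk', hi'] at h
        exact Fin.ext (by omega)
      have h2 : k' ≠ j' := by
        intro h; apply hkj; apply_fun Fin.val at h; simp [hk', hj'] at h
        exact Fin.ext (by omega)
      have h3 : k' ≠ i := by
        intro h; apply_fun Fin.val at h; simp [hk'] at h; omega
      have h4 : k' ≠ j := by
        intro h; apply_fun Fin.val at h; simp [hk'] at h; omega
      rw [Equiv.swap_apply_of_ne_of_ne h1 h2, Equiv.swap_apply_of_ne_of_ne h3 h4]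
      exact hσ k hk
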